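/- Let w, k, and b be positive integers with k ≤ w. If B is a block of length k in base b+1, then N(B, P_{b,w}) ≥ (w − k + 1)·(2^b − b)^{g_b(B)}·2^{b(w−k)}. -/

import Mathlib

/-- The one-digit weighting `ν_b^{(1)}`: `1/2^b` for `j < b`, `(2^b - b)/2^b` for `j = b`,
and `0` for `j > b`. -/
noncomputable def nu1 (b j : ℕ) : ℝ :=
  if j < b then 1 / 2 ^ b else if j = b then (2 ^ b - b) / 2 ^ b else 0

/-- The weighting `ν_b` of a block `B = (b_1, …, b_k)`: `∏_j ν_b^{(1)}(b_j)`. -/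
noncomputable def nu (b : ℕ) (B : List ℕ) : ℝ := (B.map (nu1 b)).prod

/-- The `i`-th (0-indexed) block of length `w` in base `b`, in lexicographic order. -/
def lexBlock (b w i : ℕ) : List ℕ :=
  (List.range w).map (fun j => i / b ^ (w - 1 - j) % b)

/-- The block `P_{b,w}`: running over the blocks `P` of length `w` in base `b+1` in
lexicographic order, concatenate `2^{bw}·ν_b(P) = (2^b - b)^{g_b(P)}` copies of each `P`. -/
def Pblock (b w : ℕ) : List ℕ :=
  ((List.range ((b + 1) ^ w)).map fun i =>
    (List.replicate ((2 ^ b - b) ^ ((lexBlock (b + 1) w i).count b))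
      (lexBlock (b + 1) w i)).flatten).flatten

/-- `numOcc B y` is the number of occurrences of the block `B` as a contiguous
subblock of the block `y`. -/
def numOcc (B y : List ℕ) : ℕ :=
  ((List.range (y.length + 1)).filter (fun i => B.isPrefixOf (y.drop i))).length

open Finset

lemma lexBlock_length (c m i : ℕ) : (lexBlock c m i).length = m := by
  simp [lexBlock]

lemma lexBlock_zero (c i : ℕ) : lexBlock c 0 i = [] := by simp [lexBlock]

lemma digit_aux (c e m q r : ℕ) (hc : 0 < c) (he : e < m) :
    (c ^ m * q + r) / c ^ e % c = r / c ^ e % c := by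
  have h1 : c ^ m * q = c ^ e * (c ^ (m - e) * q) := by
    rw [← mul_assoc, ← pow_add]
    congr 2
    omega
  rw [h1, Nat.mul_add_div (pow_pos hc e), Nat.add_comm]
  have h2 : c ^ (m - e) * q = c * (c ^ (m - e - 1) * q) := by
    rw [← mul_assoc, ← pow_succ']
    congr 2
    omega
  rw [h2, Nat.add_mul_mod_self_left]

lemma lexBlock_succ (c m i : ℕ) (hc : 0 < c) (hi : i < c ^ (m + 1)) :
    lexBlock c (m + 1) i = (i / c ^ m) :: lexBlock c m (i % c ^ m) := by
  unfold lexBlock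
  rw [List.range_succ_eq_map, List.map_cons, List.map_map]
  congr 1
  · simp only [Nat.add_sub_cancel, Nat.sub_zero]
    exact Nat.mod_eq_of_lt (Nat.div_lt_of_lt_mul (by rwa [← pow_succ]))
  · apply List.map_congr_left
    intro j hj
    rw [List.mem_range] at hj
    have he : m + 1 - 1 - (j + 1) = m - 1 - j := by omega
    simp only [Function.comp_apply]
    rw [he]
    conv_lhs => rw [← Nat.div_add_mod i (c ^ m)]
    exact digit_aux c (m - 1 - j) m (i / c ^ m) (i % c ^ m) hc (by omega)

lemma filter_range_length (p : ℕ → Bool) (n : ℕ) :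
    ((List.range n).filter p).length = ∑ i ∈ Finset.range n, if p i then 1 else 0 := by
  induction n with
  | zero => simp
  | succ n ih =>
      rw [List.range_succ, List.filter_append, List.length_append, ih, Finset.sum_range_succ]
      by_cases h : p n <;> simp [h]

lemma list_sum_range (f : ℕ → ℕ) (n : ℕ) :
    ((List.range n).map f).sum = ∑ i ∈ Finset.range n, f i := by
  induction n with
  | zero => simp
  | succ n ih =>
      rw [List.range_succ, List.map_append, List.sum_append, Finset.sum_range_succ, ih]; simp

lemma numOcc_eq (B y : List ℕ) :
    numOcc B y = ∑ i ∈ Finset.range (y.length + 1),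
      if B.isPrefixOf (y.drop i) then 1 else 0 :=
  filter_range_length _ _

lemma numOcc_cons (B : List ℕ) (x : ℕ) (L : List ℕ) :
    numOcc B (x :: L) = numOcc B L + (if B.isPrefixOf (x :: L) then 1 else 0) := by
  rw [numOcc_eq, numOcc_eq, List.length_cons, Finset.sum_range_succ']
  simp

lemma numOcc_nil (B : List ℕ) (hB : B ≠ []) : numOcc B [] = 0 := by
  cases B with
  | nil => exact absurd rfl hB
  | cons a l => simp [numOcc, List.isPrefixOf]

lemma numOcc_append (B : List ℕ) (hB : B ≠ []) (x y : List ℕ) :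
    numOcc B x + numOcc B y ≤ numOcc B (x ++ y) := by
  induction x with
  | nil => simp [numOcc_nil B hB]
  | cons a x ih =>
      rw [List.cons_append, numOcc_cons, numOcc_cons]
      have hmono : (if B.isPrefixOf (a :: x) then 1 else 0) ≤
          (if B.isPrefixOf (a :: (x ++ y)) then 1 else 0) := by
        by_cases h : B.isPrefixOf (a :: x)
        · have : B.isPrefixOf (a :: (x ++ y)) := by
            rw [List.isPrefixOf_iff_prefix] at h ⊢
            exact h.trans ((a :: x).prefix_append y)
          simp [h, this]
        · simp [h]
      omega

lemma numOcc_flatten (B : List ℕ) (hB : B ≠ []) (l : List (List ℕ)) :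
    (l.map (numOcc B)).sum ≤ numOcc B l.flatten := by
  induction l with
  | nil => simp [numOcc_nil B hB]
  | cons x l ih =>
      rw [List.map_cons, List.sum_cons, List.flatten_cons]
      calc numOcc B x + (l.map (numOcc B)).sum ≤ numOcc B x + numOcc B l.flatten := by omega
        _ ≤ _ := numOcc_append B hB _ _

lemma numOcc_replicate (B : List ℕ) (hB : B ≠ []) (n : ℕ) (P : List ℕ) :
    n * numOcc B P ≤ numOcc B (List.replicate n P).flatten := by
  have := numOcc_flatten B hB (List.replicate n P)
  rwa [List.map_replicate, List.sum_replicate, smul_eq_mul] at this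

lemma sum_split (c m : ℕ) (hc : 0 < c) (f : List ℕ → ℕ) :
    ∑ i ∈ Finset.range (c ^ (m + 1)), f (lexBlock c (m + 1) i)
      = ∑ d ∈ Finset.range c, ∑ r ∈ Finset.range (c ^ m), f (d :: lexBlock c m r) := by
  have hcm : 0 < c ^ m := pow_pos hc m
  rw [← Finset.sum_product']
  apply Finset.sum_nbij' (i := fun i => (i / c ^ m, i % c ^ m))
    (j := fun p => p.1 * c ^ m + p.2)
  · intro a ha
    rw [Finset.mem_range] at ha
    rw [Finset.mem_product, Finset.mem_range, Finset.mem_range]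
    constructor
    · exact Nat.div_lt_of_lt_mul (by rw [pow_succ] at ha; omega)
    · exact Nat.mod_lt _ hcm
  · intro p hp
    rw [Finset.mem_product, Finset.mem_range, Finset.mem_range] at hp
    rw [Finset.mem_range, pow_succ]
    calc p.1 * c ^ m + p.2 < p.1 * c ^ m + c ^ m := by omega
      _ = (p.1 + 1) * c ^ m := by ring
      _ ≤ c * c ^ m := Nat.mul_le_mul_right _ (by omega)
      _ = c ^ m * c := by ring
  · intro a ha
    exact Nat.div_add_mod' a (c ^ m)
  · intro p hp
    rw [Finset.mem_product, Finset.mem_range, Finset.mem_range] at hp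
    have h1 : (p.1 * c ^ m + p.2) / c ^ m = p.1 := by
      rw [mul_comm, Nat.mul_add_div hcm, Nat.div_eq_of_lt hp.2, add_zero]
    have h2 : (p.1 * c ^ m + p.2) % c ^ m = p.2 := by
      rw [add_comm, Nat.add_mul_mod_self_right, Nat.mod_eq_of_lt hp.2]
    exact Prod.ext h1 h2
  · intro a ha
    rw [Finset.mem_range] at ha
    rw [lexBlock_succ c m a hc ha]

lemma sumw (b : ℕ) (hb : 0 < b) :
    ∑ d ∈ Finset.range (b + 1), (2 ^ b - b) ^ (if d = b then 1 else 0) = 2 ^ b := by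
  rw [Finset.sum_range_succ]
  have h1 : ∀ d ∈ Finset.range b, (2 ^ b - b) ^ (if d = b then 1 else 0) = 1 := by
    intro d hd
    rw [Finset.mem_range] at hd
    rw [if_neg (by omega)]
    rfl
  rw [Finset.sum_congr rfl h1, Finset.sum_const, Finset.card_range, if_pos rfl, pow_one,
    smul_eq_mul, mul_one]
  have : b < 2 ^ b := Nat.lt_two_pow_self
  omega

lemma keyE (b : ℕ) (hb : 0 < b) (m : ℕ) : ∀ (B : List ℕ) (j : ℕ),
    (∀ d ∈ B, d < b + 1) → j + B.length ≤ m →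
    ∑ i ∈ Finset.range ((b + 1) ^ m),
      (2 ^ b - b) ^ ((lexBlock (b + 1) m i).count b) *
        (if B.isPrefixOf ((lexBlock (b + 1) m i).drop j) then 1 else 0)
      = (2 ^ b - b) ^ B.count b * 2 ^ (b * (m - B.length)) := by
  induction m with
  | zero =>
      intro B j hd hj
      have hB : B = [] := List.length_eq_zero_iff.mp (by omega)
      have hj0 : j = 0 := by omega
      subst hB hj0
      simp [lexBlock_zero, List.isPrefixOf]
  | succ m ih =>
      intro B j hd hj
      rw [sum_split (b + 1) m (by omega)
        (fun L => (2 ^ b - b) ^ (L.count b) *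
          (if B.isPrefixOf (L.drop j) then 1 else 0))]
      have hcount : ∀ d (L : List ℕ), L.count b + (if d = b then 1 else 0) = (d :: L).count b := by
        intro d L
        rw [List.count_cons]
        simp
      match j, B with
      | j + 1, B =>
        -- drop (j+1) (d :: L) = drop j L
        have key : ∀ d ∈ Finset.range (b + 1),
            (∑ r ∈ Finset.range ((b + 1) ^ m),
              (2 ^ b - b) ^ ((d :: lexBlock (b + 1) m r).count b) *
                (if B.isPrefixOf ((d :: lexBlock (b + 1) m r).drop (j + 1)) then 1 else 0))
            = (2 ^ b - b) ^ (if d = b then 1 else 0) *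
                ((2 ^ b - b) ^ B.count b * 2 ^ (b * (m - B.length))) := by
          intro d _
          rw [← ih B j hd (by omega), Finset.mul_sum]
          apply Finset.sum_congr rfl
          intro r _
          rw [List.drop_succ_cons, ← hcount, pow_add]
          ring
        rw [Finset.sum_congr rfl key, ← Finset.sum_mul, sumw b hb]
        have h1 : m + 1 - B.length = (m - B.length) + 1 := by omega
        rw [h1, Nat.mul_succ, pow_add]
        ring
      | 0, [] =>
        have key : ∀ d ∈ Finset.range (b + 1),
            (∑ r ∈ Finset.range ((b + 1) ^ m),
              (2 ^ b - b) ^ ((d :: lexBlock (b + 1) m r).count b) *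
                (if List.isPrefixOf [] ((d :: lexBlock (b + 1) m r).drop 0) then 1 else 0))
            = (2 ^ b - b) ^ (if d = b then 1 else 0) * 2 ^ (b * m) := by
          intro d _
          have := ih [] 0 (by simp) (by simp)
          simp only [List.count_nil, pow_zero, one_mul, List.length_nil, Nat.sub_zero] at this
          rw [← this, Finset.mul_sum]
          apply Finset.sum_congr rfl
          intro r _
          have hnil : ∀ (l : List ℕ), List.isPrefixOf ([] : List ℕ) l = true := by intro l; simp [List.isPrefixOf]
          simp only [List.drop_zero, hnil, if_pos]
          rw [← hcount, pow_add]
          ring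
        rw [Finset.sum_congr rfl key, ← Finset.sum_mul, sumw b hb]
        simp only [List.count_nil, pow_zero, one_mul, List.length_nil, Nat.sub_zero]
        rw [Nat.mul_succ, pow_add]
        ring
      | 0, b0 :: B' =>
        have hb0 : b0 < b + 1 := hd b0 (by simp)
        have hd' : ∀ d ∈ B', d < b + 1 := fun d h => hd d (by simp [h])
        have hlen' : (0 : ℕ) + B'.length ≤ m := by
          have := hj; simp at this ⊢; omega
        have key : ∀ d ∈ Finset.range (b + 1),
            (∑ r ∈ Finset.range ((b + 1) ^ m),
              (2 ^ b - b) ^ ((d :: lexBlock (b + 1) m r).count b) *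
                (if (b0 :: B').isPrefixOf ((d :: lexBlock (b + 1) m r).drop 0) then 1 else 0))
            = ((2 ^ b - b) ^ (if d = b then 1 else 0) * (if d = b0 then 1 else 0)) *
                ((2 ^ b - b) ^ B'.count b * 2 ^ (b * (m - B'.length))) := by
          intro d _
          rw [← ih B' 0 hd' hlen', Finset.mul_sum]
          apply Finset.sum_congr rfl
          intro r _
          simp only [List.drop_zero]
          have hsplit : (if (b0 :: B').isPrefixOf (d :: lexBlock (b + 1) m r) then (1:ℕ) else 0)
              = (if d = b0 then 1 else 0) * (if B'.isPrefixOf (lexBlock (b + 1) m r) then 1 else 0) := by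
            have hun : (b0 :: B').isPrefixOf (d :: lexBlock (b + 1) m r)
                = ((b0 == d) && B'.isPrefixOf (lexBlock (b + 1) m r)) := rfl
            by_cases h1 : d = b0
            · subst h1
              by_cases h2 : B'.isPrefixOf (lexBlock (b + 1) m r) <;> simp [hun, h2]
            · simp [hun, Ne.symm h1, h1]
          rw [hsplit, ← hcount, pow_add]
          ring
        rw [Finset.sum_congr rfl key, ← Finset.sum_mul]
        have hsum : ∑ d ∈ Finset.range (b + 1),
            (2 ^ b - b) ^ (if d = b then 1 else 0) * (if d = b0 then 1 else 0)
            = (2 ^ b - b) ^ (if b0 = b then 1 else 0) := by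
          rw [Finset.sum_eq_single b0]
          · simp
          · intro d _ hne; simp [hne]
          · intro h; exact absurd (Finset.mem_range.mpr hb0) h
        rw [hsum]
        have hc2 : (b0 :: B').count b = B'.count b + (if b0 = b then 1 else 0) := by simp [List.count_cons]
        have hl2 : m + 1 - (b0 :: B').length = m - B'.length := by simp
        rw [hc2, hl2, pow_add]
        ring

theorem stmt2 (w k b : ℕ) (hw : 0 < w) (hk : 0 < k) (hb : 0 < b) (hkw : k ≤ w)
    (B : List ℕ) (hlen : B.length = k) (hbase : ∀ d ∈ B, d < b + 1) :
    (w - k + 1) * (2 ^ b - b) ^ B.count b * 2 ^ (b * (w - k)) ≤ numOcc B (Pblock b w) := by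
  have hBne : B ≠ [] := by
    intro h; rw [h] at hlen; simp at hlen; omega
  set a := 2 ^ b - b with ha
  -- Step 1
  have h1 : ∑ i ∈ Finset.range ((b + 1) ^ w),
      a ^ ((lexBlock (b + 1) w i).count b) * numOcc B (lexBlock (b + 1) w i)
      ≤ numOcc B (Pblock b w) := by
    have h0 := numOcc_flatten B hBne ((List.range ((b + 1) ^ w)).map fun i =>
      (List.replicate (a ^ ((lexBlock (b + 1) w i).count b)) (lexBlock (b + 1) w i)).flatten)
    rw [List.map_map, list_sum_range] at h0
    refine le_trans (Finset.sum_le_sum ?_) h0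
    intro i _
    exact numOcc_replicate B hBne _ _
  -- Step 2
  have h2 : ∀ i, ∑ j ∈ Finset.range (w - k + 1),
      (if B.isPrefixOf ((lexBlock (b + 1) w i).drop j) then 1 else 0)
      ≤ numOcc B (lexBlock (b + 1) w i) := by
    intro i
    rw [numOcc_eq, lexBlock_length]
    apply Finset.sum_le_sum_of_subset
    apply Finset.range_subset_range.mpr
    omega
  have h3 : ∑ i ∈ Finset.range ((b + 1) ^ w),
      a ^ ((lexBlock (b + 1) w i).count b) *
        (∑ j ∈ Finset.range (w - k + 1),
          (if B.isPrefixOf ((lexBlock (b + 1) w i).drop j) then 1 else 0))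
      ≤ ∑ i ∈ Finset.range ((b + 1) ^ w),
      a ^ ((lexBlock (b + 1) w i).count b) * numOcc B (lexBlock (b + 1) w i) :=
    Finset.sum_le_sum fun i _ => Nat.mul_le_mul_left _ (h2 i)
  have h4 : ∑ i ∈ Finset.range ((b + 1) ^ w),
      a ^ ((lexBlock (b + 1) w i).count b) *
        (∑ j ∈ Finset.range (w - k + 1),
          (if B.isPrefixOf ((lexBlock (b + 1) w i).drop j) then 1 else 0))
      = (w - k + 1) * (a ^ B.count b * 2 ^ (b * (w - k))) := by
    have : ∀ i ∈ Finset.range ((b + 1) ^ w),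
        a ^ ((lexBlock (b + 1) w i).count b) *
          (∑ j ∈ Finset.range (w - k + 1),
            (if B.isPrefixOf ((lexBlock (b + 1) w i).drop j) then 1 else 0))
        = ∑ j ∈ Finset.range (w - k + 1),
            a ^ ((lexBlock (b + 1) w i).count b) *
              (if B.isPrefixOf ((lexBlock (b + 1) w i).drop j) then 1 else 0) := by
      intro i _; rw [Finset.mul_sum]
    rw [Finset.sum_congr rfl this, Finset.sum_comm]
    have hE : ∀ j ∈ Finset.range (w - k + 1),
        ∑ i ∈ Finset.range ((b + 1) ^ w),
          a ^ ((lexBlock (b + 1) w i).count b) *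
            (if B.isPrefixOf ((lexBlock (b + 1) w i).drop j) then 1 else 0)
        = a ^ B.count b * 2 ^ (b * (w - k)) := by
      intro j hj
      rw [Finset.mem_range] at hj
      rw [keyE b hb w B j hbase (by omega), hlen]
    rw [Finset.sum_congr rfl hE, Finset.sum_const, Finset.card_range, smul_eq_mul]
  calc (w - k + 1) * a ^ B.count b * 2 ^ (b * (w - k))
      = (w - k + 1) * (a ^ B.count b * 2 ^ (b * (w - k))) := by ring
    _ ≤ _ := by rw [← h4]; exact le_trans h3 h1
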